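/- Let f : Fin n → ℝ[x₁,…,xₙ] be a polynomial vector field, p ∈ ℝ[x₁,…,xₙ], and let x : ℝ → ℝⁿ be a trajectory of the system ẋ = f(x) with initial point x(0) = x₀. If x₀ lies in the transverse set Trans_{p,f}, then there exists ε > 0 such that for all t ∈ (0, ε), the evaluation (L¹_f p)(x(t)) < 0. -/

import Mathlib

open MvPolynomial Set

noncomputable def lieDeriv {n : ℕ} (f : Fin n → MvPolynomial (Fin n) ℝ)
    (p : MvPolynomial (Fin n) ℝ) : MvPolynomial (Fin n) ℝ :=
  ∑ i, pderiv i p * f i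

lemma chain_aux {n : ℕ} (f : Fin n → MvPolynomial (Fin n) ℝ) (x : ℝ → Fin n → ℝ)
    (hx : ∀ (i : Fin n) (t : ℝ), HasDerivAt (fun s => x s i) (eval (x t) (f i)) t)
    (q : MvPolynomial (Fin n) ℝ) (t : ℝ) :
    HasDerivAt (fun s => eval (x s) q)
      (∑ i, eval (x t) (pderiv i q) * eval (x t) (f i)) t := by
  induction q using MvPolynomial.induction_on with
  | C a => simpa using hasDerivAt_const t (a : ℝ)
  | add p q hp hq =>
      have := hp.add hq
      simpa [Finset.sum_add_distrib, add_mul, Pi.add_def] using this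
  | mul_X p i hp =>
      have key : ∀ j : Fin n,
          eval (x t) (pderiv j (X i : MvPolynomial (Fin n) ℝ)) = if j = i then 1 else 0 := by
        intro j
        rcases eq_or_ne j i with h | h
        · simp [h]
        · simp [pderiv_X, Pi.single_eq_of_ne h.symm, h]
      have := hp.mul (hx i t)
      have h2 : (∑ j, eval (x t) (pderiv j (p * X i)) * eval (x t) (f j)) =
          (∑ j, eval (x t) (pderiv j p) * eval (x t) (f j)) * x t i
            + eval (x t) p * eval (x t) (f i) := by
        simp only [pderiv_mul, map_add, map_mul, add_mul, Finset.sum_add_distrib, key,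
          ite_mul, mul_ite, mul_one, mul_zero, zero_mul, Finset.sum_ite_eq', eval_X,
          Finset.mem_univ, if_true, Finset.sum_mul]
        have h3 : ∑ j, eval (x t) (pderiv j p) * x t i * eval (x t) (f j)
            = (∑ j, eval (x t) (pderiv j p) * eval (x t) (f j)) * x t i := by
          rw [Finset.sum_mul]
          exact Finset.sum_congr rfl fun j _ => by ring
        rw [h3]
        rw [Finset.sum_mul]
      rw [h2]
      simpa [Pi.mul_def] using this

lemma lieDeriv_chain {n : ℕ} (f : Fin n → MvPolynomial (Fin n) ℝ) (x : ℝ → Fin n → ℝ)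
    (hx : ∀ (i : Fin n) (t : ℝ), HasDerivAt (fun s => x s i) (eval (x t) (f i)) t)
    (q : MvPolynomial (Fin n) ℝ) (t : ℝ) :
    HasDerivAt (fun s => eval (x s) q) (eval (x t) (lieDeriv f q)) t := by
  have := chain_aux f x hx q t
  simpa [lieDeriv] using this

theorem transverse_initial_point {n : ℕ} (f : Fin n → MvPolynomial (Fin n) ℝ)
    (p : MvPolynomial (Fin n) ℝ) (x : ℝ → Fin n → ℝ)
    (hx : ∀ (i : Fin n) (t : ℝ), HasDerivAt (fun s => x s i) (eval (x t) (f i)) t)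
    (x₀ : Fin n → ℝ) (hx0 : x 0 = x₀)
    (htrans : ∃ k, 1 ≤ k ∧
      (∀ j, 1 ≤ j → j < k → eval x₀ ((lieDeriv f)^[j] p) = 0) ∧
      eval x₀ ((lieDeriv f)^[k] p) < 0) :
    ∃ ε > (0 : ℝ), ∀ t ∈ Ioo (0 : ℝ) ε, eval (x t) (lieDeriv f p) < 0 := by
  obtain ⟨k, hk1, hzero, hneg⟩ := htrans
  set g : ℕ → ℝ → ℝ := fun j t => eval (x t) ((lieDeriv f)^[j] p) with hg
  have hderiv : ∀ j t, HasDerivAt (g j) (g (j + 1) t) t := by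
    intro j t
    have := lieDeriv_chain f x hx ((lieDeriv f)^[j] p) t
    simpa [hg, ← Function.iterate_succ_apply'] using this
  have hcont : ∀ j, Continuous (g j) :=
    fun j => continuous_iff_continuousAt.mpr fun t => (hderiv j t).continuousAt
  have claim : ∀ d, d < k → ∃ ε > (0 : ℝ), ∀ t ∈ Ioo (0 : ℝ) ε, g (k - d) t < 0 := by
    intro d
    induction d with
    | zero =>
        intro _
        have hck : ContinuousAt (g k) 0 := (hcont k).continuousAt
        have hk0 : g k 0 < 0 := by simpa [hg, hx0] using hneg
        have hlt : ∀ᶠ t in nhds (0 : ℝ), g k t < 0 :=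
          hck.eventually_lt_const hk0
        obtain ⟨ε, hε, h⟩ := Metric.eventually_nhds_iff.mp hlt
        refine ⟨ε, hε, fun t ht => ?_⟩
        have : dist t 0 < ε := by
          rw [Real.dist_eq, sub_zero, abs_of_pos ht.1]
          exact ht.2
        simpa using h this
    | succ d ih =>
        intro hdk
        obtain ⟨ε, hε, hih⟩ := ih (by omega)
        set j := k - (d + 1) with hj
        have hj1 : 1 ≤ j := by omega
        have hjk : j < k := by omega
        have hjsucc : j + 1 = k - d := by omega
        have hj0 : g j 0 = 0 := by simpa [hg, hx0] using hzero j hj1 hjk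
        have hanti : StrictAntiOn (g j) (Icc 0 ε) := by
          apply strictAntiOn_of_deriv_neg (convex_Icc 0 ε) ((hcont j).continuousOn)
          intro t ht
          rw [interior_Icc] at ht
          rw [(hderiv j t).deriv, hjsucc]
          exact hih t ht
        refine ⟨ε, hε, fun t ht => ?_⟩
        have h0m : (0 : ℝ) ∈ Icc 0 ε := ⟨le_refl _, le_of_lt hε⟩
        have htm : t ∈ Icc 0 ε := ⟨le_of_lt ht.1, le_of_lt ht.2⟩
        have := hanti h0m htm ht.1
        rw [hj0] at this
        simpa [hj] using this
  obtain ⟨ε, hε, h⟩ := claim (k - 1) (by omega)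
  refine ⟨ε, hε, fun t ht => ?_⟩
  have hk : k - (k - 1) = 1 := by omega
  have := h t ht
  rw [hk] at this
  simpa [hg] using this
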